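/- For the finite-dimensional cubic map F^(m) : ℝ^{2m−1} → ℝ^{2m−1} from the Cauchy-Riemann equilibrium problem, with components F₁(a)₀ = λ₁(a₁)₀ − λ₂(a₁³)₀, F₁(a)_k = 2[−k(a₂)_k + λ₁(a₁)_k − λ₂(a₁³)_k] for 1 ≤ k < m, and F₂(a)_k = 2[−k(a₁)_k + (a₂)_k] for 1 ≤ k < m, the Jacobian DF^(m)(a) is a symmetric matrix for every a. -/

import Mathlib

/-- The first component `a₁` (indices `0,…,m−1`) of `a ∈ ℝ^{2m−1}`, extended by zero. -/
def a1get (m : ℕ) (a : Fin (2 * m - 1) → ℝ) (k : ℕ) : ℝ :=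
  if h : k < m ∧ 0 < m then a ⟨k, by omega⟩ else 0

/-- The second component `a₂` (indices `1,…,m−1`) of `a ∈ ℝ^{2m−1}`, extended by zero. -/
def a2get (m : ℕ) (a : Fin (2 * m - 1) → ℝ) (k : ℕ) : ℝ :=
  if h : 1 ≤ k ∧ k < m then a ⟨m - 1 + k, by omega⟩ else 0

/-- The symmetrized discrete cube `(a₁³)_k = (a₁∗a₁∗a₁)_k`, with `a₁` extended evenly to
negative indices and by zero beyond `m−1`. -/
noncomputable def cube (m : ℕ) (a : Fin (2 * m - 1) → ℝ) (k : ℤ) : ℝ :=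
  ∑' j : ℤ × ℤ,
    a1get m a j.1.natAbs * a1get m a j.2.natAbs * a1get m a (k - j.1 - j.2).natAbs

/-- The finite-dimensional Cauchy–Riemann equilibrium map `F^(m) : ℝ^{2m−1} → ℝ^{2m−1}`. -/
noncomputable def Fcr (m : ℕ) (lam1 lam2 : ℝ) (a : Fin (2 * m - 1) → ℝ)
    (i : Fin (2 * m - 1)) : ℝ :=
  if (i : ℕ) = 0 then lam1 * a1get m a 0 - lam2 * cube m a 0
  else if (i : ℕ) < m then
    2 * (-((i : ℕ) : ℝ) * a2get m a (i : ℕ) + lam1 * a1get m a (i : ℕ)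
        - lam2 * cube m a ((i : ℕ) : ℤ))
  else
    2 * (-((((i : ℕ) - (m - 1) : ℕ)) : ℝ) * a1get m a ((i : ℕ) - (m - 1))
        + a2get m a ((i : ℕ) - (m - 1)))


/-- linear functional giving the `j`-th coefficient of the even extension of `a₁`. -/
noncomputable def glF (m : ℕ) (j : ℤ) : (Fin (2 * m - 1) → ℝ) →L[ℝ] ℝ :=
  if h : j.natAbs < m ∧ 0 < m then ContinuousLinearMap.proj ⟨j.natAbs, by omega⟩ else 0

/-- linear functional giving the `k`-th coefficient of `a₂`. -/
noncomputable def a2L (m : ℕ) (k : ℕ) : (Fin (2 * m - 1) → ℝ) →L[ℝ] ℝ :=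
  if h : 1 ≤ k ∧ k < m then ContinuousLinearMap.proj ⟨m - 1 + k, by omega⟩ else 0

lemma glF_apply (m : ℕ) (j : ℤ) (a : Fin (2 * m - 1) → ℝ) :
    glF m j a = a1get m a j.natAbs := by
  unfold glF a1get
  split
  · rfl
  · rename_i h
    simp only [dif_neg h, ContinuousLinearMap.zero_apply]

lemma a1get_eq (m : ℕ) (k : ℕ) (a : Fin (2 * m - 1) → ℝ) :
    a1get m a k = glF m (k : ℤ) a := by
  rw [glF_apply]; simp

lemma a2L_apply (m : ℕ) (k : ℕ) (a : Fin (2 * m - 1) → ℝ) :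
    a2get m a k = a2L m k a := by
  unfold a2get a2L
  split
  · rename_i h
    simp [dif_pos h, ContinuousLinearMap.proj_apply]
  · rename_i h
    simp [dif_neg h]

lemma glF_neg (m : ℕ) (j : ℤ) : glF m (-j) = glF m j := by
  unfold glF; simp

lemma glF_zero_of (m : ℕ) (j : ℤ) (h : m ≤ j.natAbs) : glF m j = 0 := by
  unfold glF
  rw [dif_neg]; omega

noncomputable def Bz (m : ℕ) : Finset ℤ := Finset.Icc (-(m : ℤ) + 1) ((m : ℤ) - 1)

lemma mem_Bz {m : ℕ} {j : ℤ} : j ∈ Bz m ↔ j.natAbs < m := by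
  simp only [Bz, Finset.mem_Icc]; omega

/-- generic triple-product term appearing in the cube and its derivative. -/
noncomputable def trip (m : ℕ) (k : ℤ) (x y z : Fin (2 * m - 1) → ℝ) (j : ℤ × ℤ) : ℝ :=
  glF m j.1 x * glF m j.2 y * glF m (k - j.1 - j.2) z

lemma trip_vanish (m : ℕ) (k : ℤ) (x y z : Fin (2 * m - 1) → ℝ) :
    ∀ j ∉ Bz m ×ˢ Bz m, trip m k x y z j = 0 := by
  intro j hj
  rw [Finset.mem_product] at hj
  unfold trip
  rcases not_and_or.mp hj with h | h
  · rw [glF_zero_of m j.1 (by have := mem_Bz.not.mp h; omega)]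
    simp
  · rw [glF_zero_of m j.2 (by have := mem_Bz.not.mp h; omega)]
    simp

lemma trip_summable (m : ℕ) (k : ℤ) (x y z : Fin (2 * m - 1) → ℝ) :
    Summable (trip m k x y z) :=
  summable_of_ne_finset_zero (trip_vanish m k x y z)

lemma cube_eq_tsum (m : ℕ) (a : Fin (2 * m - 1) → ℝ) (k : ℤ) :
    cube m a k = ∑' j : ℤ × ℤ, trip m k a a a j := by
  unfold cube trip
  exact tsum_congr fun j => by rw [glF_apply, glF_apply, glF_apply]

lemma cube_eq_sum (m : ℕ) (a : Fin (2 * m - 1) → ℝ) (k : ℤ) :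
    cube m a k = ∑ j ∈ Bz m ×ˢ Bz m, trip m k a a a j := by
  rw [cube_eq_tsum]
  exact tsum_eq_sum (trip_vanish m k a a a)

/-- the (doubled) quadratic form `Q(t) = Σ_j g_j g_{t-j}`. -/
noncomputable def Qf (m : ℕ) (a : Fin (2 * m - 1) → ℝ) (t : ℤ) : ℝ :=
  ∑' j : ℤ, glF m j a * glF m (t - j) a

lemma Qf_neg (m : ℕ) (a : Fin (2 * m - 1) → ℝ) (t : ℤ) : Qf m a (-t) = Qf m a t := by
  unfold Qf
  rw [← (Equiv.neg ℤ).tsum_eq (fun j => glF m j a * glF m (t - j) a)]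
  refine tsum_congr fun j => ?_
  simp only [Equiv.neg_apply]
  rw [show -t - j = -(t - -j) by ring, glF_neg, ← glF_neg m j]

lemma T_swap (m : ℕ) (k : ℤ) (x a : Fin (2 * m - 1) → ℝ) :
    ∑' j : ℤ × ℤ, trip m k a x a j = ∑' j : ℤ × ℤ, trip m k x a a j := by
  rw [← (Equiv.prodComm ℤ ℤ).tsum_eq (trip m k a x a)]
  refine tsum_congr fun j => ?_
  unfold trip
  simp only [Equiv.prodComm_apply, Prod.fst_swap, Prod.snd_swap]
  rw [show k - j.2 - j.1 = k - j.1 - j.2 by ring]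
  ring

def flipE (k : ℤ) : ℤ × ℤ ≃ ℤ × ℤ where
  toFun j := (j.1, k - j.1 - j.2)
  invFun j := (j.1, k - j.1 - j.2)
  left_inv j := Prod.ext rfl (by ring)
  right_inv j := Prod.ext rfl (by ring)

lemma T_flip (m : ℕ) (k : ℤ) (x a : Fin (2 * m - 1) → ℝ) :
    ∑' j : ℤ × ℤ, trip m k a a x j = ∑' j : ℤ × ℤ, trip m k a x a j := by
  rw [← (flipE k).tsum_eq (trip m k a x a)]
  refine tsum_congr fun j => ?_
  unfold trip flipE
  simp only [Equiv.coe_fn_mk]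
  rw [show k - j.1 - (k - j.1 - j.2) = j.2 by ring]
  ring

noncomputable def dterm (m : ℕ) (a : Fin (2 * m - 1) → ℝ) (k q : ℤ) (j : ℤ × ℤ) : ℝ :=
  (if j.1 = q then (1 : ℝ) else 0) * glF m j.2 a * glF m (k - j.1 - j.2) a

lemma dterm_vanish (m : ℕ) (a : Fin (2 * m - 1) → ℝ) (k q : ℤ) :
    ∀ j ∉ ({q} : Finset ℤ) ×ˢ Bz m, dterm m a k q j = 0 := by
  intro j hj
  rw [Finset.mem_product] at hj
  unfold dterm
  rcases not_and_or.mp hj with h | h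
  · rw [if_neg (by simpa using h)]; ring
  · rw [glF_zero_of m j.2 (by have := mem_Bz.not.mp h; omega)]; simp

lemma dterm_summable (m : ℕ) (a : Fin (2 * m - 1) → ℝ) (k q : ℤ) :
    Summable (dterm m a k q) :=
  summable_of_ne_finset_zero (dterm_vanish m a k q)

lemma tsum_dterm (m : ℕ) (a : Fin (2 * m - 1) → ℝ) (k q : ℤ) :
    ∑' j : ℤ × ℤ, dterm m a k q j = Qf m a (k - q) := by
  rw [Summable.tsum_prod' (dterm_summable m a k q) (fun b => by
    apply summable_of_ne_finset_zero (s := Bz m)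
    intro j2 hj2
    unfold dterm
    rw [glF_zero_of m j2 (by have := mem_Bz.not.mp hj2; omega)]; simp)]
  rw [tsum_eq_single q (fun b' hb' => by
    have : ∀ c : ℤ, dterm m a k q (b', c) = 0 := fun c => by
      unfold dterm; rw [if_neg hb']; ring
    simp [this])]
  unfold dterm Qf
  refine tsum_congr fun j2 => ?_
  rw [if_pos rfl, one_mul, show k - q - j2 = k - q - j2 by rfl]

lemma glF_single (m : ℕ) (j : ℤ) (i : Fin (2 * m - 1)) :
    glF m j (Pi.single i 1) = if j.natAbs < m ∧ (i : ℕ) = j.natAbs then 1 else 0 := by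
  unfold glF
  by_cases h : j.natAbs < m ∧ 0 < m
  · rw [dif_pos h]
    rw [ContinuousLinearMap.proj_apply, Pi.single_apply]
    by_cases hi : (⟨j.natAbs, by omega⟩ : Fin (2 * m - 1)) = i
    · rw [if_pos hi, if_pos ⟨h.1, by rw [← hi]⟩]
    · rw [if_neg hi, if_neg]
      rintro ⟨h1, h2⟩
      exact hi (by ext; simp [← h2])
  · rw [dif_neg h]
    have hm : ¬ (j.natAbs < m ∧ (i : ℕ) = j.natAbs) := by
      rintro ⟨h1, h2⟩
      exact h ⟨h1, by omega⟩
    rw [if_neg hm]; rfl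

lemma a2L_single (m : ℕ) (k : ℕ) (i : Fin (2 * m - 1)) :
    a2L m k (Pi.single i 1) = if (1 ≤ k ∧ k < m) ∧ (i : ℕ) = m - 1 + k then 1 else 0 := by
  unfold a2L
  by_cases h : 1 ≤ k ∧ k < m
  · rw [dif_pos h]
    rw [ContinuousLinearMap.proj_apply, Pi.single_apply]
    by_cases hi : (⟨m - 1 + k, by omega⟩ : Fin (2 * m - 1)) = i
    · rw [if_pos hi, if_pos ⟨h, by rw [← hi]⟩]
    · rw [if_neg hi, if_neg]
      rintro ⟨h1, h2⟩
      exact hi (by ext; simp [← h2])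
  · rw [dif_neg h, if_neg (by tauto)]; rfl

lemma T1_eval (m : ℕ) (hm : 0 < m) (a : Fin (2 * m - 1) → ℝ) (k : ℤ) (i : Fin (2 * m - 1))
    (hi : (i : ℕ) < m) :
    ∑' j : ℤ × ℤ, trip m k (Pi.single i 1) a a j
      = if (i : ℕ) = 0 then Qf m a k
        else Qf m a (k - (i : ℕ)) + Qf m a (k + (i : ℕ)) := by
  by_cases h0 : (i : ℕ) = 0
  · rw [if_pos h0]
    have key : ∀ j : ℤ × ℤ, trip m k (Pi.single i 1) a a j = dterm m a k 0 j := fun j => by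
      unfold trip dterm
      rw [glF_single]
      have hc : (j.1.natAbs < m ∧ (i : ℕ) = j.1.natAbs) ↔ j.1 = 0 := by omega
      rw [if_congr hc rfl rfl]
    rw [tsum_congr key, tsum_dterm]
    norm_num
  · rw [if_neg h0]
    have key : ∀ j : ℤ × ℤ, trip m k (Pi.single i 1) a a j
        = dterm m a k ((i : ℕ) : ℤ) j + dterm m a k (-((i : ℕ) : ℤ)) j := fun j => by
      unfold trip dterm
      rw [glF_single]
      have : (if j.1.natAbs < m ∧ (i : ℕ) = j.1.natAbs then (1:ℝ) else 0)
          = (if j.1 = ((i : ℕ) : ℤ) then (1:ℝ) else 0)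
            + (if j.1 = -((i : ℕ) : ℤ) then (1:ℝ) else 0) := by
        split_ifs <;> (try norm_num) <;> (exfalso; omega)
      rw [this]; ring
    rw [tsum_congr key,
      Summable.tsum_add (dterm_summable m a k ((i : ℕ) : ℤ)) (dterm_summable m a k (-((i : ℕ) : ℤ))),
      tsum_dterm, tsum_dterm, sub_neg_eq_add]

/-- value of the derivative of the cube in the direction of a basis vector. -/
noncomputable def Dval (m : ℕ) (a : Fin (2 * m - 1) → ℝ) (k : ℤ) (l : ℕ) : ℝ :=
  if l = 0 then 3 * Qf m a k else 3 * (Qf m a (k - l) + Qf m a (k + l))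

noncomputable def DCL (m : ℕ) (a : Fin (2 * m - 1) → ℝ) (k : ℤ) :
    (Fin (2 * m - 1) → ℝ) →L[ℝ] ℝ :=
  ∑ j ∈ Bz m ×ˢ Bz m,
    ((glF m j.1 a * glF m j.2 a) • glF m (k - j.1 - j.2)
      + glF m (k - j.1 - j.2) a • (glF m j.1 a • glF m j.2 + glF m j.2 a • glF m j.1))

lemma hasFDerivAt_cube (m : ℕ) (a : Fin (2 * m - 1) → ℝ) (k : ℤ) :
    HasFDerivAt (fun b => cube m b k) (DCL m a k) a := by
  have h : (fun b => cube m b k)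
      = fun b => ∑ j ∈ Bz m ×ˢ Bz m, (glF m j.1 b * glF m j.2 b * glF m (k - j.1 - j.2) b) := by
    funext b; rw [cube_eq_sum]; rfl
  rw [h]
  exact HasFDerivAt.fun_sum fun j _ =>
    (((glF m j.1).hasFDerivAt.mul (glF m j.2).hasFDerivAt).mul
      (glF m (k - j.1 - j.2)).hasFDerivAt)

lemma DCL_apply (m : ℕ) (a v : Fin (2 * m - 1) → ℝ) (k : ℤ) :
    DCL m a k v = ∑' j : ℤ × ℤ, (trip m k v a a j + trip m k a v a j + trip m k a a v j) := by
  rw [tsum_eq_sum (s := Bz m ×ˢ Bz m) (fun j hj => by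
    rw [trip_vanish m k v a a j hj, trip_vanish m k a v a j hj, trip_vanish m k a a v j hj]
    ring)]
  unfold DCL
  rw [ContinuousLinearMap.sum_apply]
  refine Finset.sum_congr rfl fun j _ => ?_
  unfold trip
  simp only [ContinuousLinearMap.add_apply, ContinuousLinearMap.smul_apply, smul_eq_mul]
  ring

lemma DCL_single_lt (m : ℕ) (hm : 0 < m) (a : Fin (2 * m - 1) → ℝ) (k : ℤ)
    (i : Fin (2 * m - 1)) (hi : (i : ℕ) < m) :
    DCL m a k (Pi.single i 1) = Dval m a k (i : ℕ) := by
  rw [DCL_apply,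
    Summable.tsum_add ((trip_summable m k (Pi.single i 1) a a).add (trip_summable m k a (Pi.single i 1) a))
      (trip_summable m k a a (Pi.single i 1)),
    Summable.tsum_add (trip_summable m k (Pi.single i 1) a a) (trip_summable m k a (Pi.single i 1) a),
    T_swap, T_flip, T_swap, T1_eval m hm a k i hi]
  unfold Dval
  split_ifs <;> ring

lemma DCL_single_ge (m : ℕ) (a : Fin (2 * m - 1) → ℝ) (k : ℤ)
    (i : Fin (2 * m - 1)) (hi : m ≤ (i : ℕ)) :
    DCL m a k (Pi.single i 1) = 0 := by
  rw [DCL_apply]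
  have hz : ∀ j : ℤ, glF m j (Pi.single i 1) = 0 := fun j => by
    rw [glF_single, if_neg]; omega
  have : ∀ j : ℤ × ℤ,
      (trip m k (Pi.single i 1) a a j + trip m k a (Pi.single i 1) a j
        + trip m k a a (Pi.single i 1) j) = 0 := fun j => by
    unfold trip; rw [hz, hz, hz]; ring
  rw [tsum_congr this, tsum_zero]

noncomputable def Lrow (m : ℕ) (lam1 lam2 : ℝ) (a : Fin (2 * m - 1) → ℝ)
    (i : Fin (2 * m - 1)) : (Fin (2 * m - 1) → ℝ) →L[ℝ] ℝ :=
  if (i : ℕ) = 0 then lam1 • glF m ((0 : ℕ) : ℤ) - lam2 • DCL m a 0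
  else if (i : ℕ) < m then
    (2 : ℝ) • ((-((i : ℕ) : ℝ)) • a2L m (i : ℕ) + lam1 • glF m (((i : ℕ) : ℕ) : ℤ)
        - lam2 • DCL m a ((i : ℕ) : ℤ))
  else
    (2 : ℝ) • ((-((((i : ℕ) - (m - 1) : ℕ)) : ℝ)) • glF m ((((i : ℕ) - (m - 1) : ℕ)) : ℤ)
        + a2L m ((i : ℕ) - (m - 1)))

lemma hasFDerivAt_row (m : ℕ) (lam1 lam2 : ℝ) (a : Fin (2 * m - 1) → ℝ)
    (i : Fin (2 * m - 1)) :
    HasFDerivAt (fun b => Fcr m lam1 lam2 b i) (Lrow m lam1 lam2 a i) a := by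
  unfold Fcr Lrow
  simp only [a1get_eq, a2L_apply]
  split_ifs with h1 h2
  · exact ((glF m ((0 : ℕ) : ℤ)).hasFDerivAt.const_mul lam1).sub
      ((hasFDerivAt_cube m a 0).const_mul lam2)
  · exact ((((a2L m (i : ℕ)).hasFDerivAt.const_mul (-((i : ℕ) : ℝ))).add
      ((glF m (((i : ℕ) : ℕ) : ℤ)).hasFDerivAt.const_mul lam1)).sub
      ((hasFDerivAt_cube m a ((i : ℕ) : ℤ)).const_mul lam2)).const_mul (2 : ℝ)
  · exact (((glF m ((((i : ℕ) - (m - 1) : ℕ)) : ℤ)).hasFDerivAt.const_mul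
      (-((((i : ℕ) - (m - 1) : ℕ)) : ℝ))).add
      (a2L m ((i : ℕ) - (m - 1))).hasFDerivAt).const_mul (2 : ℝ)

lemma Dval_symm (m : ℕ) (a : Fin (2 * m - 1) → ℝ) (k l : ℕ) :
    (if k = 0 then (1 : ℝ) else 2) * Dval m a (k : ℤ) l
      = (if l = 0 then (1 : ℝ) else 2) * Dval m a (l : ℤ) k := by
  unfold Dval
  by_cases hk : k = 0 <;> by_cases hl : l = 0
  · subst hk; subst hl; simp
  · subst hk
    rw [if_pos rfl, if_pos rfl, if_neg hl, if_neg hl,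
      show ((0 : ℕ) : ℤ) - (l : ℤ) = -(l : ℤ) by push_cast; ring, Qf_neg,
      show ((0 : ℕ) : ℤ) + (l : ℤ) = (l : ℤ) by push_cast; ring]
    ring
  · subst hl
    rw [if_neg hk, if_neg hk, if_pos rfl, if_pos rfl,
      show ((0 : ℕ) : ℤ) - (k : ℤ) = -(k : ℤ) by push_cast; ring, Qf_neg,
      show ((0 : ℕ) : ℤ) + (k : ℤ) = (k : ℤ) by push_cast; ring]
    ring
  · rw [if_neg hk, if_neg hk, if_neg hl, if_neg hl,
      show (l : ℤ) - (k : ℤ) = -((k : ℤ) - l) by ring, Qf_neg,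
      show (l : ℤ) + (k : ℤ) = (k : ℤ) + l by ring]

lemma Lrow_symm (m : ℕ) (hm : 0 < m) (lam1 lam2 : ℝ) (a : Fin (2 * m - 1) → ℝ)
    (i i' : Fin (2 * m - 1)) :
    Lrow m lam1 lam2 a i (Pi.single i' 1) = Lrow m lam1 lam2 a i' (Pi.single i 1) := by
  have hI : (i : ℕ) < 2 * m - 1 := i.isLt
  have hI' : (i' : ℕ) < 2 * m - 1 := i'.isLt
  unfold Lrow
  by_cases h1 : (i : ℕ) = 0 <;> by_cases h1' : (i' : ℕ) = 0
  · -- i = i' = 0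
    have : i = i' := Fin.ext (by omega)
    subst this; rfl
  · rw [if_pos h1, if_neg h1']
    by_cases h2' : (i' : ℕ) < m
    · -- (0, mid)
      rw [if_pos h2']
      simp only [ContinuousLinearMap.sub_apply, ContinuousLinearMap.add_apply,
        ContinuousLinearMap.smul_apply, smul_eq_mul, glF_single, a2L_single,
        DCL_single_lt m hm a _ _ (by omega : (i' : ℕ) < m),
        DCL_single_lt m hm a _ _ (by omega : (i : ℕ) < m), Int.natAbs_natCast, and_true, true_and]
      rw [h1]
      have hD := Dval_symm m a 0 (i' : ℕ)
      rw [if_pos rfl, if_neg h1', Nat.cast_zero] at hD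
      split_ifs
      all_goals try linear_combination (-lam2) * hD
      all_goals exfalso
      all_goals omega
    · -- (0, hi)
      rw [if_neg h2']
      simp only [ContinuousLinearMap.sub_apply, ContinuousLinearMap.add_apply,
        ContinuousLinearMap.smul_apply, smul_eq_mul, glF_single, a2L_single,
        DCL_single_ge m a _ _ (by omega : m ≤ (i' : ℕ)), Int.natAbs_natCast, and_true, true_and]
      rw [h1]
      split_ifs
      all_goals try ring
      all_goals exfalso
      all_goals omega
  · rw [if_neg h1, if_pos h1']
    by_cases h2 : (i : ℕ) < m
    · -- (mid, 0)
      rw [if_pos h2]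
      simp only [ContinuousLinearMap.sub_apply, ContinuousLinearMap.add_apply,
        ContinuousLinearMap.smul_apply, smul_eq_mul, glF_single, a2L_single,
        DCL_single_lt m hm a _ _ (by omega : (i' : ℕ) < m),
        DCL_single_lt m hm a _ _ (by omega : (i : ℕ) < m), Int.natAbs_natCast, and_true, true_and]
      rw [h1']
      have hD := Dval_symm m a 0 (i : ℕ)
      rw [if_pos rfl, if_neg h1, Nat.cast_zero] at hD
      split_ifs
      all_goals try linear_combination lam2 * hD
      all_goals exfalso
      all_goals omega
    · -- (hi, 0)
      rw [if_neg h2]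
      simp only [ContinuousLinearMap.sub_apply, ContinuousLinearMap.add_apply,
        ContinuousLinearMap.smul_apply, smul_eq_mul, glF_single, a2L_single,
        DCL_single_ge m a _ _ (by omega : m ≤ (i : ℕ)), Int.natAbs_natCast, and_true, true_and]
      rw [h1']
      split_ifs
      all_goals try ring
      all_goals exfalso
      all_goals omega
  · by_cases h2 : (i : ℕ) < m <;> by_cases h2' : (i' : ℕ) < m
    · -- (mid, mid)
      rw [if_neg h1, if_pos h2, if_neg h1', if_pos h2']
      simp only [ContinuousLinearMap.sub_apply, ContinuousLinearMap.add_apply,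
        ContinuousLinearMap.smul_apply, smul_eq_mul, glF_single, a2L_single,
        DCL_single_lt m hm a _ _ (by omega : (i' : ℕ) < m),
        DCL_single_lt m hm a _ _ (by omega : (i : ℕ) < m), Int.natAbs_natCast, and_true, true_and]
      have hD := Dval_symm m a (i : ℕ) (i' : ℕ)
      rw [if_neg h1, if_neg h1'] at hD
      by_cases he : (i : ℕ) = (i' : ℕ)
      · rw [he]
      · split_ifs
        all_goals try linear_combination (-lam2) * hD
        all_goals exfalso
        all_goals omega
    · -- (mid, hi)
      rw [if_neg h1, if_pos h2, if_neg h1', if_neg h2']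
      by_cases hA : (i' : ℕ) = m - 1 + (i : ℕ)
      · have hk : (i' : ℕ) - (m - 1) = (i : ℕ) := by omega
        rw [hk]
        simp only [ContinuousLinearMap.sub_apply, ContinuousLinearMap.add_apply,
          ContinuousLinearMap.smul_apply, smul_eq_mul, glF_single, a2L_single,
          DCL_single_ge m a _ _ (by omega : m ≤ (i' : ℕ)), Int.natAbs_natCast, and_true, true_and]
        split_ifs
        all_goals try ring
        all_goals exfalso
        all_goals omega
      · simp only [ContinuousLinearMap.sub_apply, ContinuousLinearMap.add_apply,
          ContinuousLinearMap.smul_apply, smul_eq_mul, glF_single, a2L_single,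
          DCL_single_ge m a _ _ (by omega : m ≤ (i' : ℕ)), Int.natAbs_natCast, and_true, true_and]
        split_ifs
        all_goals try ring
        all_goals exfalso
        all_goals omega
    · -- (hi, mid)
      rw [if_neg h1, if_neg h2, if_neg h1', if_pos h2']
      by_cases hA : (i : ℕ) = m - 1 + (i' : ℕ)
      · have hk : (i : ℕ) - (m - 1) = (i' : ℕ) := by omega
        rw [hk]
        simp only [ContinuousLinearMap.sub_apply, ContinuousLinearMap.add_apply,
          ContinuousLinearMap.smul_apply, smul_eq_mul, glF_single, a2L_single,
          DCL_single_ge m a _ _ (by omega : m ≤ (i : ℕ)), Int.natAbs_natCast, and_true, true_and]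
        split_ifs
        all_goals try ring
        all_goals exfalso
        all_goals omega
      · simp only [ContinuousLinearMap.sub_apply, ContinuousLinearMap.add_apply,
          ContinuousLinearMap.smul_apply, smul_eq_mul, glF_single, a2L_single,
          DCL_single_ge m a _ _ (by omega : m ≤ (i : ℕ)), Int.natAbs_natCast, and_true, true_and]
        split_ifs
        all_goals try ring
        all_goals exfalso
        all_goals omega
    · -- (hi, hi)
      rw [if_neg h1, if_neg h2, if_neg h1', if_neg h2']
      by_cases he : (i : ℕ) = (i' : ℕ)
      · have hk : (i : ℕ) - (m - 1) = (i' : ℕ) - (m - 1) := by omega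
        rw [hk]
        simp only [ContinuousLinearMap.smul_apply, ContinuousLinearMap.add_apply,
          smul_eq_mul, glF_single, a2L_single, Int.natAbs_natCast, and_true, true_and]
        split_ifs
        all_goals try ring
        all_goals exfalso
        all_goals omega
      · simp only [ContinuousLinearMap.smul_apply, ContinuousLinearMap.add_apply,
          smul_eq_mul, glF_single, a2L_single, Int.natAbs_natCast, and_true, true_and]
        split_ifs
        all_goals try ring
        all_goals exfalso
        all_goals omega

/-- The Jacobian `DF^(m)(a)` of the Cauchy–Riemann map is a symmetric matrix for every `a`. -/
theorem Fcr_jacobian_symmetric (m : ℕ) (hm : 1 ≤ m) (lam1 lam2 : ℝ)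
    (a : Fin (2 * m - 1) → ℝ) :
    ∃ J : Matrix (Fin (2 * m - 1)) (Fin (2 * m - 1)) ℝ,
      J.IsSymm ∧
      HasFDerivAt (Fcr m lam1 lam2) (Matrix.mulVecLin J).toContinuousLinearMap a := by
  have hm0 : 0 < m := hm
  refine ⟨fun i i' => Lrow m lam1 lam2 a i (Pi.single i' 1), ?_, ?_⟩
  · ext i i'
    exact Lrow_symm m hm0 lam1 lam2 a i' i
  · rw [hasFDerivAt_pi']
    intro i
    have key : (ContinuousLinearMap.proj (R := ℝ)
          (φ := fun _ : Fin (2 * m - 1) => ℝ) i).comp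
          (Matrix.mulVecLin
            (fun i i' => Lrow m lam1 lam2 a i (Pi.single i' 1))).toContinuousLinearMap
        = Lrow m lam1 lam2 a i := by
      refine ContinuousLinearMap.ext fun v => ?_
      have hL := LinearMap.pi_apply_eq_sum_univ
        ((Lrow m lam1 lam2 a i) : (Fin (2 * m - 1) → ℝ) →ₗ[ℝ] ℝ) v
      rw [ContinuousLinearMap.coe_coe] at hL
      have hv : ∀ i' : Fin (2 * m - 1),
          (fun j => if i' = j then (1 : ℝ) else 0) = Pi.single i' 1 := fun i' => by
        funext j; rw [Pi.single_apply]; exact if_congr eq_comm rfl rfl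
      simp only [hv] at hL
      simp only [ContinuousLinearMap.coe_comp', Function.comp_apply,
        ContinuousLinearMap.proj_apply, LinearMap.coe_toContinuousLinearMap',
        Matrix.mulVecLin_apply, Matrix.mulVec, dotProduct]
      change (∑ x, (Lrow m lam1 lam2 a i) (Pi.single x 1) * v x) = _
      rw [hL]
      exact Finset.sum_congr rfl fun x _ => by rw [smul_eq_mul]; ring
    rw [key]
    exact hasFDerivAt_row m lam1 lam2 a i
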